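/- Let D be the horizontal-type derivation with marked point z₀ ∈ K and parameters (e, s, d, u), and let E be the horizontal-type derivation with marked point 0, parameters (ẽ, s̃, d̃, ũ) and twist family (w_z)_{z≠0}. Then for every m ∈ ℤⁿ, [D,E](χ^m) = d·d̃·t^{s̃−1}·q^{s−1}·φ^{ẽ}·(C₀ + C₁ + C₂)·χ^{m+e+ẽ}, where q = t − z₀, v_{z₀}(x) = ⟨x,u⟩/d, ṽ₀(x) = ⟨x,ũ⟩/d̃, and C₀ = s̃·ṽ₀(m)·q² − s·v_{z₀}(m)·t² + (ṽ₀(m)·v_{z₀}(ẽ) − v_{z₀}(m)·ṽ₀(e))·t·q, C₁ = ṽ₀(m)·α_{ẽ}·q² − s̃·α_m·q² − v_{z₀}(ẽ)·α_m·t·q + v_{z₀}(m)·α_e·t·q, C₂ = −t·α′_m·q² − α_m·α_{ẽ}·q². -/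

import Mathlib

/- STATEMENT 9: commutator of two horizontal-type derivations applied to
`χ^m`: `[D,E](χ^m) = d·d'·t^{s'−1}·q^{s−1}·φ^{e'}·(C₀+C₁+C₂)·χ^{m+e+e'}` with
`q = t − z₀`, `v(x) = ⟨x,u⟩/d`, `ṽ(x) = ⟨x,u'⟩/d'` and
`C₀ = s'·ṽ(m)·q² − s·v(m)·t² + (ṽ(m)·v(e') − v(m)·ṽ(e))·t·q`,
`C₁ = ṽ(m)·α_{e'}·q² − s'·α_m·q² − v(e')·α_m·t·q + v(m)·α_e·t·q`,
`C₂ = −t·α′_m·q² − α_m·α_{e'}·q²`. -/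

noncomputable section

/-- standard pairing `⟨m,v⟩ = Σᵢ mᵢ vᵢ` on `ℤⁿ`. -/
def pairZ {n : ℕ} (m v : Fin n → ℤ) : ℤ := ∑ i, m i * v i

/-- derivative `f ↦ df/dt` of a rational function `f ∈ K(t)`. -/
def rderiv {K : Type*} [Field K] (φ : RatFunc K) : RatFunc K :=
  (algebraMap (Polynomial K) (RatFunc K) (Polynomial.derivative φ.num)
      * algebraMap (Polynomial K) (RatFunc K) φ.denom
    - algebraMap (Polynomial K) (RatFunc K) φ.num
      * algebraMap (Polynomial K) (RatFunc K) (Polynomial.derivative φ.denom))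
    / (algebraMap (Polynomial K) (RatFunc K) φ.denom) ^ 2

/-- twisting family: `φ^m = ∏_{z≠0} (t−z)^{−⟨m,w_z⟩}`, for a finitely
supported family of vectors `w_z ∈ ℤⁿ`. -/
def phim {K : Type*} [Field K] {n : ℕ} (w : K →₀ (Fin n → ℤ)) (m : Fin n → ℤ) :
    RatFunc K :=
  ∏ z ∈ w.support, (RatFunc.X - RatFunc.C z) ^ (-(pairZ m (w z)))

/-- `α_m = t·(φ^m)′/φ^m = −Σ_{z≠0} ⟨m,w_z⟩·t/(t−z)`. -/
def alpham {K : Type*} [Field K] {n : ℕ} (w : K →₀ (Fin n → ℤ)) (m : Fin n → ℤ) :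
    RatFunc K :=
  -∑ z ∈ w.support, (pairZ m (w z) : RatFunc K) * RatFunc.X / (RatFunc.X - RatFunc.C z)

/-- Horizontal-type derivation `D` with marked point `z₀`, parameters
`(e, s, d, u)` and all other vertices `0`:
`f·χ^m ↦ q^s·(⟨m,u⟩·f + d·q·f′)·χ^{m+e}` with `q = t − z₀`. -/
def DhorPt {K : Type*} [Field K] {n : ℕ} (z₀ : K) (e : Fin n → ℤ) (s d : ℤ)
    (u : Fin n → ℤ) (b : (Fin n → ℤ) →₀ RatFunc K) : (Fin n → ℤ) →₀ RatFunc K :=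
  b.sum fun m f => Finsupp.single (m + e)
    ((RatFunc.X - RatFunc.C z₀) ^ s
      * ((pairZ m u : RatFunc K) * f
        + (d : RatFunc K) * (RatFunc.X - RatFunc.C z₀) * rderiv f))

/-- Horizontal-type derivation `E` with marked point `0`, parameters
`(e', s', d', u')` and twist family `w`:
`f·χ^m ↦ t^{s'}·φ^{e'}·(⟨m,u'⟩·f + d'·(t·f′ − α_m·f))·χ^{m+e'}`. -/
def EhorTw {K : Type*} [Field K] {n : ℕ} (e' : Fin n → ℤ) (s' d' : ℤ)
    (u' : Fin n → ℤ) (w : K →₀ (Fin n → ℤ))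
    (b : (Fin n → ℤ) →₀ RatFunc K) : (Fin n → ℤ) →₀ RatFunc K :=
  b.sum fun m f => Finsupp.single (m + e')
    ((RatFunc.X : RatFunc K) ^ s' * phim w e'
      * ((pairZ m u' : RatFunc K) * f
        + (d' : RatFunc K) * (RatFunc.X * rderiv f - alpham w m * f)))

section Helpers

variable {K : Type*} [Field K]

open Polynomial

local notation "am" => algebraMap (Polynomial K) (RatFunc K)

lemma rderiv_div (p q : Polynomial K) (hq : q ≠ 0) :
    rderiv ((am p) / (am q))
      = ((am (derivative p)) * am q - am p * am (derivative q)) / (am q) ^ 2 := by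
  set f : RatFunc K := am p / am q with hf
  have hq' : (am q) ≠ 0 := RatFunc.algebraMap_ne_zero hq
  have hd' : (am f.denom) ≠ 0 := RatFunc.algebraMap_ne_zero f.denom_ne_zero
  have h1 : f.num * q = p * f.denom := by
    apply RatFunc.algebraMap_injective K
    push_cast [map_mul]
    rw [← div_eq_div_iff hd' hq', RatFunc.num_div_denom]
  have h2 : derivative f.num * q + f.num * derivative q
      = derivative p * f.denom + p * derivative f.denom := by
    have := congrArg derivative h1
    simpa [derivative_mul] using this
  have h1' := congrArg am h1
  have h2' := congrArg am h2
  push_cast [map_mul, map_add] at h1' h2'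
  rw [rderiv]
  rw [div_eq_div_iff (pow_ne_zero 2 hd') (pow_ne_zero 2 hq')]
  linear_combination (am q * am f.denom) * h2'
    - (am (derivative f.denom) * am q + am (derivative q) * am f.denom) * h1'

lemma rderiv_algebraMap (p : Polynomial K) : rderiv (am p) = am (derivative p) := by
  have := rderiv_div (K := K) p 1 one_ne_zero
  simpa using this

lemma rderiv_zero : rderiv (0 : RatFunc K) = 0 := by
  simpa using rderiv_algebraMap (0 : Polynomial K)

lemma rderiv_one : rderiv (1 : RatFunc K) = 0 := by
  simpa using rderiv_algebraMap (1 : Polynomial K)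

lemma rderiv_X : rderiv (RatFunc.X : RatFunc K) = 1 := by
  simpa using rderiv_algebraMap (Polynomial.X : Polynomial K)

lemma rderiv_C (c : K) : rderiv (RatFunc.C c) = 0 := by
  simpa [RatFunc.algebraMap_C] using rderiv_algebraMap (Polynomial.C c)

lemma rderiv_intCast (k : ℤ) : rderiv ((k : RatFunc K)) = 0 := by
  have h : ((k : RatFunc K)) = am ((k : Polynomial K)) := (map_intCast _ k).symm
  rw [h, rderiv_algebraMap]
  simp


lemma rderiv_add (f g : RatFunc K) : rderiv (f + g) = rderiv f + rderiv g := by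
  induction f using RatFunc.induction_on with
  | f p q hq =>
  induction g using RatFunc.induction_on with
  | f r w hw =>
  have hq' : (am q) ≠ 0 := RatFunc.algebraMap_ne_zero hq
  have hw' : (am w) ≠ 0 := RatFunc.algebraMap_ne_zero hw
  have h : am p / am q + am r / am w = am (p * w + q * r) / am (q * w) := by
    rw [map_add, map_mul, map_mul, map_mul, ← div_add_div _ _ hq' hw']
  rw [h, rderiv_div _ _ (mul_ne_zero hq hw), rderiv_div _ _ hq, rderiv_div _ _ hw]
  simp only [derivative_add, derivative_mul, map_add, map_mul]
  field_simp
  ring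

lemma rderiv_mul (f g : RatFunc K) : rderiv (f * g) = rderiv f * g + f * rderiv g := by
  induction f using RatFunc.induction_on with
  | f p q hq =>
  induction g using RatFunc.induction_on with
  | f r w hw =>
  have hq' : (am q) ≠ 0 := RatFunc.algebraMap_ne_zero hq
  have hw' : (am w) ≠ 0 := RatFunc.algebraMap_ne_zero hw
  have h : am p / am q * (am r / am w) = am (p * r) / am (q * w) := by
    rw [map_mul, map_mul, ← div_mul_div_comm]
  rw [h, rderiv_div _ _ (mul_ne_zero hq hw), rderiv_div _ _ hq, rderiv_div _ _ hw]
  simp only [derivative_mul, map_add, map_mul]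
  field_simp
  ring

lemma rderiv_neg (f : RatFunc K) : rderiv (-f) = -rderiv f := by
  have := rderiv_add f (-f)
  simp only [add_neg_cancel, rderiv_zero] at this
  linear_combination -this

lemma rderiv_sub (f g : RatFunc K) : rderiv (f - g) = rderiv f - rderiv g := by
  rw [sub_eq_add_neg, rderiv_add, rderiv_neg, sub_eq_add_neg]

lemma rderiv_inv (f : RatFunc K) (hf : f ≠ 0) :
    rderiv f⁻¹ = -rderiv f / f ^ 2 := by
  induction f using RatFunc.induction_on with
  | f p q hq =>
  have hp : p ≠ 0 := by
    intro h
    simp [h] at hf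
  have hq' : (am q) ≠ 0 := RatFunc.algebraMap_ne_zero hq
  have hp' : (am p) ≠ 0 := RatFunc.algebraMap_ne_zero hp
  have h : (am p / am q)⁻¹ = am q / am p := by
    rw [inv_div]
  rw [h, rderiv_div _ _ hp, rderiv_div _ _ hq]
  field_simp
  ring

lemma rderiv_pow_aux (f : RatFunc K) (n : ℕ) :
    rderiv (f ^ n) * f = n * f ^ n * rderiv f := by
  induction n with
  | zero => simp [rderiv_one]
  | succ k ih =>
    rw [pow_succ, rderiv_mul]
    push_cast
    ring_nf
    ring_nf at ih
    linear_combination f * ih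

lemma rderiv_zpow (f : RatFunc K) (hf : f ≠ 0) (k : ℤ) :
    rderiv (f ^ k) * f = k * f ^ k * rderiv f := by
  cases k with
  | ofNat n => simpa [zpow_natCast] using rderiv_pow_aux f n
  | negSucc n =>
    rw [zpow_negSucc, rderiv_inv _ (pow_ne_zero _ hf)]
    have h := rderiv_pow_aux f (n + 1)
    have hfp : f ^ (n+1) ≠ 0 := pow_ne_zero _ hf
    field_simp
    push_cast at h ⊢
    linear_combination -h

lemma X_sub_C_ne_zero (z : K) : (RatFunc.X - RatFunc.C z : RatFunc K) ≠ 0 := by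
  rw [← RatFunc.algebraMap_X, ← RatFunc.algebraMap_C, ← map_sub]
  exact RatFunc.algebraMap_ne_zero (Polynomial.X_sub_C_ne_zero z)

lemma rderiv_X_sub_C (z : K) : rderiv (RatFunc.X - RatFunc.C z : RatFunc K) = 1 := by
  rw [rderiv_sub, rderiv_X, rderiv_C, sub_zero]

lemma RatFunc.X_ne_zero' : (RatFunc.X : RatFunc K) ≠ 0 := by
  rw [← RatFunc.algebraMap_X]
  exact RatFunc.algebraMap_ne_zero Polynomial.X_ne_zero

lemma rderiv_prod_zpow (S : Finset K) (ν : K → ℤ) :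
    RatFunc.X * rderiv (∏ z ∈ S, (RatFunc.X - RatFunc.C z : RatFunc K) ^ (ν z))
      = (∑ z ∈ S, (ν z : RatFunc K) * RatFunc.X / (RatFunc.X - RatFunc.C z))
        * ∏ z ∈ S, (RatFunc.X - RatFunc.C z : RatFunc K) ^ (ν z) := by
  classical
  induction S using Finset.induction_on with
  | empty => simp [rderiv_one]
  | insert _ _ ha ih =>
    rename_i a S
    rw [Finset.prod_insert ha, Finset.sum_insert ha, rderiv_mul]
    have hg : (RatFunc.X - RatFunc.C a : RatFunc K) ≠ 0 := X_sub_C_ne_zero a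
    have h1 : rderiv ((RatFunc.X - RatFunc.C a : RatFunc K) ^ (ν a))
        = (ν a : RatFunc K) * (RatFunc.X - RatFunc.C a) ^ (ν a) / (RatFunc.X - RatFunc.C a) := by
      rw [eq_div_iff hg]
      have := rderiv_zpow (RatFunc.X - RatFunc.C a : RatFunc K) hg (ν a)
      rw [rderiv_X_sub_C] at this
      linear_combination this
    rw [h1]
    field_simp [hg]
    have hS : (∑ x ∈ S, RatFunc.X * (ν x : RatFunc K) / (RatFunc.X - RatFunc.C x))
        = ∑ z ∈ S, (ν z : RatFunc K) * RatFunc.X / (RatFunc.X - RatFunc.C z) :=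
      Finset.sum_congr rfl fun z _ => by ring
    linear_combination (RatFunc.X - RatFunc.C a) * ih
      - ((RatFunc.X - RatFunc.C a) * ∏ x ∈ S, (RatFunc.X - RatFunc.C x : RatFunc K) ^ ν x) * hS

lemma X_mul_rderiv_phim {n : ℕ} (w : K →₀ (Fin n → ℤ)) (m : Fin n → ℤ) :
    RatFunc.X * rderiv (phim w m) = alpham w m * phim w m := by
  rw [phim, alpham, rderiv_prod_zpow w.support (fun z => -(pairZ m (w z)))]
  congr 1
  push_cast
  rw [← Finset.sum_neg_distrib]
  exact Finset.sum_congr rfl fun z _ => by ring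

lemma pairZ_add {n : ℕ} (m e v : Fin n → ℤ) :
    pairZ (m + e) v = pairZ m v + pairZ e v := by
  simp [pairZ, Pi.add_apply, add_mul, Finset.sum_add_distrib]

lemma alpham_add {n : ℕ} (w : K →₀ (Fin n → ℤ)) (m e : Fin n → ℤ) :
    alpham w (m + e) = alpham w m + alpham w e := by
  simp only [alpham, pairZ_add, Int.cast_add, add_mul, add_div, Finset.sum_add_distrib]
  ring

end Helpers

set_option maxHeartbeats 2000000 in
theorem commutator_horizontal_horizontal_on_chi
    {K : Type*} [Field K] [IsAlgClosed K] [CharZero K] {n : ℕ} (hn : 1 ≤ n)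
    (z₀ : K) (e : Fin n → ℤ) (s d : ℤ) (hd : 0 < d) (u : Fin n → ℤ)
    (e' : Fin n → ℤ) (s' d' : ℤ) (hd' : 0 < d') (u' : Fin n → ℤ)
    (w : K →₀ (Fin n → ℤ)) (hw0 : w 0 = 0) (m : Fin n → ℤ) :
    (DhorPt z₀ e s d u (EhorTw e' s' d' u' w (Finsupp.single m (1 : RatFunc K)))
      - EhorTw e' s' d' u' w (DhorPt z₀ e s d u (Finsupp.single m (1 : RatFunc K))))
    = Finsupp.single (m + e + e')
        ((d : RatFunc K) * (d' : RatFunc K)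
          * (RatFunc.X : RatFunc K) ^ (s' - 1) * (RatFunc.X - RatFunc.C z₀) ^ (s - 1)
          * phim w e'
          * (((s' : RatFunc K) * ((pairZ m u' : RatFunc K) / (d' : RatFunc K))
                  * (RatFunc.X - RatFunc.C z₀) ^ (2 : ℕ)
                - (s : RatFunc K) * ((pairZ m u : RatFunc K) / (d : RatFunc K))
                  * RatFunc.X ^ (2 : ℕ)
                + ((pairZ m u' : RatFunc K) / (d' : RatFunc K)
                      * ((pairZ e' u : RatFunc K) / (d : RatFunc K))
                    - (pairZ m u : RatFunc K) / (d : RatFunc K)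
                      * ((pairZ e u' : RatFunc K) / (d' : RatFunc K)))
                  * RatFunc.X * (RatFunc.X - RatFunc.C z₀))
            + ((pairZ m u' : RatFunc K) / (d' : RatFunc K) * alpham w e'
                  * (RatFunc.X - RatFunc.C z₀) ^ (2 : ℕ)
                - (s' : RatFunc K) * alpham w m * (RatFunc.X - RatFunc.C z₀) ^ (2 : ℕ)
                - (pairZ e' u : RatFunc K) / (d : RatFunc K) * alpham w m
                  * RatFunc.X * (RatFunc.X - RatFunc.C z₀)
                + (pairZ m u : RatFunc K) / (d : RatFunc K) * alpham w e
                  * RatFunc.X * (RatFunc.X - RatFunc.C z₀))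
            + (-(RatFunc.X * rderiv (alpham w m)
                  * (RatFunc.X - RatFunc.C z₀) ^ (2 : ℕ))
                - alpham w m * alpham w e'
                  * (RatFunc.X - RatFunc.C z₀) ^ (2 : ℕ)))) := by
  classical
  have hX : (RatFunc.X : RatFunc K) ≠ 0 := RatFunc.X_ne_zero'
  have hq : (RatFunc.X - RatFunc.C z₀ : RatFunc K) ≠ 0 := X_sub_C_ne_zero z₀
  have hdK : (d : RatFunc K) ≠ 0 := by
    have h1 : ((d : ℤ) : K) ≠ 0 := Int.cast_ne_zero.mpr hd.ne'
    simpa [map_intCast] using (map_ne_zero (algebraMap K (RatFunc K))).mpr h1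
  have hd'K : (d' : RatFunc K) ≠ 0 := by
    have h1 : ((d' : ℤ) : K) ≠ 0 := Int.cast_ne_zero.mpr hd'.ne'
    simpa [map_intCast] using (map_ne_zero (algebraMap K (RatFunc K))).mpr h1
  have hphi : rderiv (phim w e') = alpham w e' * phim w e' / RatFunc.X := by
    rw [eq_div_iff hX]
    linear_combination X_mul_rderiv_phim w e'
  have hXsplit0 : (RatFunc.X : RatFunc K) ^ (s' - 1) * RatFunc.X = RatFunc.X ^ s' := by
    rw [zpow_sub_one₀ hX]
    field_simp
  have hqsplit : (RatFunc.X - RatFunc.C z₀ : RatFunc K) ^ (s - 1) * (RatFunc.X - RatFunc.C z₀)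
      = (RatFunc.X - RatFunc.C z₀) ^ s := by
    rw [zpow_sub_one₀ hq]
    field_simp
  have hXsplit : (RatFunc.X : RatFunc K) ^ (s' - 1) * RatFunc.X = RatFunc.X ^ s' := hXsplit0
  have hXs : rderiv ((RatFunc.X : RatFunc K) ^ s')
      = (s' : RatFunc K) * RatFunc.X ^ (s' - 1) := by
    apply mul_right_cancel₀ hX
    have h := rderiv_zpow (RatFunc.X : RatFunc K) hX s'
    rw [rderiv_X] at h
    linear_combination h - (s' : RatFunc K) * hXsplit
  have hqs : rderiv ((RatFunc.X - RatFunc.C z₀ : RatFunc K) ^ s)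
      = (s : RatFunc K) * (RatFunc.X - RatFunc.C z₀) ^ (s - 1) := by
    apply mul_right_cancel₀ hq
    have h := rderiv_zpow (RatFunc.X - RatFunc.C z₀ : RatFunc K) hq s
    rw [rderiv_X_sub_C] at h
    linear_combination h - (s : RatFunc K) * hqsplit
  have hRHS : (d : RatFunc K) * (d' : RatFunc K)
          * (RatFunc.X : RatFunc K) ^ (s' - 1) * (RatFunc.X - RatFunc.C z₀) ^ (s - 1)
          * phim w e'
          * (((s' : RatFunc K) * ((pairZ m u' : RatFunc K) / (d' : RatFunc K))
                  * (RatFunc.X - RatFunc.C z₀) ^ (2 : ℕ)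
                - (s : RatFunc K) * ((pairZ m u : RatFunc K) / (d : RatFunc K))
                  * RatFunc.X ^ (2 : ℕ)
                + ((pairZ m u' : RatFunc K) / (d' : RatFunc K)
                      * ((pairZ e' u : RatFunc K) / (d : RatFunc K))
                    - (pairZ m u : RatFunc K) / (d : RatFunc K)
                      * ((pairZ e u' : RatFunc K) / (d' : RatFunc K)))
                  * RatFunc.X * (RatFunc.X - RatFunc.C z₀))
            + ((pairZ m u' : RatFunc K) / (d' : RatFunc K) * alpham w e'
                  * (RatFunc.X - RatFunc.C z₀) ^ (2 : ℕ)
                - (s' : RatFunc K) * alpham w m * (RatFunc.X - RatFunc.C z₀) ^ (2 : ℕ)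
                - (pairZ e' u : RatFunc K) / (d : RatFunc K) * alpham w m
                  * RatFunc.X * (RatFunc.X - RatFunc.C z₀)
                + (pairZ m u : RatFunc K) / (d : RatFunc K) * alpham w e
                  * RatFunc.X * (RatFunc.X - RatFunc.C z₀))
            + (-(RatFunc.X * rderiv (alpham w m)
                  * (RatFunc.X - RatFunc.C z₀) ^ (2 : ℕ))
                - alpham w m * alpham w e'
                  * (RatFunc.X - RatFunc.C z₀) ^ (2 : ℕ)))
      = RatFunc.X ^ (s' - 1) * (RatFunc.X - RatFunc.C z₀) ^ (s - 1) * phim w e' *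
        ((s' : RatFunc K) * (pairZ m u' : RatFunc K) * (d : RatFunc K) * (RatFunc.X - RatFunc.C z₀) ^ (2:ℕ)
          - (s : RatFunc K) * (pairZ m u : RatFunc K) * (d' : RatFunc K) * RatFunc.X ^ (2:ℕ)
          + ((pairZ m u' : RatFunc K) * (pairZ e' u : RatFunc K) - (pairZ m u : RatFunc K) * (pairZ e u' : RatFunc K)) * RatFunc.X * (RatFunc.X - RatFunc.C z₀)
          + (pairZ m u' : RatFunc K) * (d : RatFunc K) * alpham w e' * (RatFunc.X - RatFunc.C z₀) ^ (2:ℕ)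
          - (s' : RatFunc K) * (d : RatFunc K) * (d' : RatFunc K) * alpham w m * (RatFunc.X - RatFunc.C z₀) ^ (2:ℕ)
          - (pairZ e' u : RatFunc K) * (d' : RatFunc K) * alpham w m * RatFunc.X * (RatFunc.X - RatFunc.C z₀)
          + (pairZ m u : RatFunc K) * (d' : RatFunc K) * alpham w e * RatFunc.X * (RatFunc.X - RatFunc.C z₀)
          - (d : RatFunc K) * (d' : RatFunc K) * RatFunc.X * rderiv (alpham w m) * (RatFunc.X - RatFunc.C z₀) ^ (2:ℕ)
          - (d : RatFunc K) * (d' : RatFunc K) * alpham w m * alpham w e' * (RatFunc.X - RatFunc.C z₀) ^ (2:ℕ)) := by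
    have hA : (d : RatFunc K) * (d : RatFunc K)⁻¹ = 1 := mul_inv_cancel₀ hdK
    have hB : (d' : RatFunc K) * (d' : RatFunc K)⁻¹ = 1 := mul_inv_cancel₀ hd'K
    simp only [div_eq_mul_inv]
    linear_combination
      (RatFunc.X ^ (s' - 1) * (RatFunc.X - RatFunc.C z₀) ^ (s - 1) * phim w e' * (d : RatFunc K)
        * ((RatFunc.X - RatFunc.C z₀) ^ (2:ℕ) * (pairZ m u' : RatFunc K)
            * ((s' : RatFunc K) + alpham w e')
          + RatFunc.X * (RatFunc.X - RatFunc.C z₀)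
            * ((pairZ m u' : RatFunc K) * (pairZ e' u : RatFunc K)
              - (pairZ m u : RatFunc K) * (pairZ e u' : RatFunc K)) * (d : RatFunc K)⁻¹)) * hB
      + (RatFunc.X ^ (s' - 1) * (RatFunc.X - RatFunc.C z₀) ^ (s - 1) * phim w e'
        * ((d' : RatFunc K) * (-((s : RatFunc K) * (pairZ m u : RatFunc K) * RatFunc.X ^ (2:ℕ))
              - (pairZ e' u : RatFunc K) * alpham w m * RatFunc.X * (RatFunc.X - RatFunc.C z₀)
              + (pairZ m u : RatFunc K) * alpham w e * RatFunc.X * (RatFunc.X - RatFunc.C z₀))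
          + RatFunc.X * (RatFunc.X - RatFunc.C z₀)
            * ((pairZ m u' : RatFunc K) * (pairZ e' u : RatFunc K)
              - (pairZ m u : RatFunc K) * (pairZ e u' : RatFunc K)))) * hA
  simp only [EhorTw, DhorPt]
  rw [Finsupp.sum_single_index (by simp [rderiv_zero]),
    Finsupp.sum_single_index (by simp [rderiv_zero]),
    Finsupp.sum_single_index (by simp [rderiv_zero]),
    Finsupp.sum_single_index (by simp [rderiv_zero])]
  rw [add_right_comm m e' e, ← Finsupp.single_sub]
  refine congrArg _ ?_
  rw [hRHS]
  simp only [rderiv_mul, rderiv_add, rderiv_sub, rderiv_one, rderiv_intCast, hphi, hXs, hqs,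
    pairZ_add, alpham_add, Int.cast_add, rderiv_zero, mul_zero, zero_mul, mul_one, add_zero,
    zero_add, sub_zero]
  have hfix : RatFunc.X ^ s' * (alpham w e' * phim w e' / RatFunc.X)
      = RatFunc.X ^ (s' - 1) * (alpham w e' * phim w e') := by
    rw [← hXsplit]
    field_simp
  rw [hfix, ← hXsplit, ← hqsplit]
  ring
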